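/- For any n with 1 ≤ n ≤ N−2, if t_n ≥ t_{n+1}, then the threshold t_n satisfies the scalar equation c_n·t_n = c_{n+1}·h(t_n), where h(x) = ∫ max(x,y) dμ(y). -/

import Mathlib

open MeasureTheory Set

private lemma intV_aux (μ : Measure ℝ) [IsProbabilityMeasure μ]
    (hmean : Integrable id μ) (W : ℝ → ℝ)
    (hmono : ∀ x x' : ℝ, 0 ≤ x → x ≤ x' → W x ≤ W x')
    (hnn : ∀ x : ℝ, 0 ≤ x → 0 ≤ W x)
    (K : ℝ) (hub : ∀ x : ℝ, 0 ≤ x → W x ≤ x + K)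
    (x : ℝ) (hx : 0 ≤ x) : Integrable (fun y => W (max x y)) μ := by
  have hm : Monotone fun y : ℝ => W (max x y) := fun a b hab =>
    hmono _ _ (hx.trans (le_max_left _ _)) (max_le_max le_rfl hab)
  refine ((integrable_const (x + K)).add hmean.abs).mono'
    hm.measurable.aestronglyMeasurable ?_
  filter_upwards with y
  have h0 : 0 ≤ W (max x y) := hnn _ (hx.trans (le_max_left _ _))
  have h1 : W (max x y) ≤ max x y + K := hub _ (hx.trans (le_max_left _ _))
  have h2 : max x y ≤ x + |y| :=
    max_le (by linarith [abs_nonneg y]) (by linarith [le_abs_self y])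
  rw [Real.norm_eq_abs, abs_of_nonneg h0]
  simp only [Pi.add_apply, id]
  linarith

private lemma int_max_aux (μ : Measure ℝ) [IsProbabilityMeasure μ]
    (hmean : Integrable id μ) (x : ℝ) (hx : 0 ≤ x) :
    Integrable (fun y : ℝ => max x y) μ :=
  intV_aux μ hmean (fun z => z) (fun _ _ _ h => h) (fun _ h => h) 0
    (fun _ _ => by simp) x hx

private lemma Flip_aux (μ : Measure ℝ) [IsProbabilityMeasure μ]
    (hmean : Integrable id μ) (W : ℝ → ℝ)
    (hmono : ∀ x x' : ℝ, 0 ≤ x → x ≤ x' → W x ≤ W x')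
    (hnn : ∀ x : ℝ, 0 ≤ x → 0 ≤ W x)
    (K : ℝ) (hub : ∀ x : ℝ, 0 ≤ x → W x ≤ x + K)
    (L : ℝ) (hL : 0 ≤ L)
    (hlip : ∀ x x' : ℝ, 0 ≤ x → x ≤ x' → W x' - W x ≤ L * (x' - x))
    (a b : ℝ) (ha : 0 ≤ a) (hab : a ≤ b) :
    (∫ y, W (max b y) ∂μ) ≤ (∫ y, W (max a y) ∂μ) + L * (b - a) := by
  have hib := intV_aux μ hmean W hmono hnn K hub b (ha.trans hab)
  have hia := intV_aux μ hmean W hmono hnn K hub a ha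
  have hmain : (∫ y, W (max b y) ∂μ) ≤ ∫ y, (W (max a y) + L * (b - a)) ∂μ := by
    refine integral_mono hib (hia.add (integrable_const _)) ?_
    intro y
    have h1 := hlip (max a y) (max b y) (ha.trans (le_max_left _ _))
      (max_le_max hab le_rfl)
    have h2 : max b y ≤ max a y + (b - a) :=
      max_le (by linarith [le_max_left a y]) (by linarith [le_max_right a y])
    have h3 : L * (max b y - max a y) ≤ L * (b - a) :=
      mul_le_mul_of_nonneg_left (by linarith) hL
    simp only
    linarith
  rw [integral_add hia (integrable_const _), integral_const] at hmain
  simpa [measure_univ] using hmain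

/-- For `1 ≤ n ≤ N-2`, if `t n ≥ t (n+1)` then the threshold `t n` satisfies the scalar
equation `c n * t n = c (n+1) * h (t n)` with `h(x) = ∫ max(x,y) dμ(y)`. -/
theorem threshold_scalar_equation_of_ge_next
    (N : ℕ) (hN : 3 ≤ N) (τ : ℝ) (hτ : 0 < τ)
    (μ : Measure ℝ) [IsProbabilityMeasure μ]
    (hsupp : μ {x : ℝ | x < 0} = 0) (hmean : Integrable id μ)
    (hposμ : 0 < μ (Ioi (0 : ℝ)))
    (c : ℕ → ℝ) (hc : ∀ n : ℕ, c n = 1 / (1 + (n : ℝ) * τ))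
    (V : ℕ → ℝ → ℝ)
    (hVN : ∀ x : ℝ, 0 ≤ x → V N x = c N * x)
    (hVn : ∀ n : ℕ, 1 ≤ n → n ≤ N - 1 → ∀ x : ℝ, 0 ≤ x →
      V n x = max (c n * x) (∫ y, V (n + 1) (max x y) ∂μ))
    (t : ℕ → ℝ)
    (ht : ∀ n : ℕ, 1 ≤ n → n ≤ N - 1 →
      (0 < t n ∧ c n * t n = ∫ y, V (n + 1) (max (t n) y) ∂μ) ∧
      (∀ s : ℝ, 0 < s → c n * s = (∫ y, V (n + 1) (max s y) ∂μ) → s = t n))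
    (h : ℝ → ℝ) (hh : ∀ x : ℝ, h x = ∫ y, max x y ∂μ) :
    ∀ n : ℕ, 1 ≤ n → n ≤ N - 2 → t (n + 1) ≤ t n →
      c n * t n = c (n + 1) * h (t n) := by
  have hcpos : ∀ m : ℕ, 0 < c m := by
    intro m; rw [hc]
    have : (0:ℝ) ≤ (m : ℝ) * τ := mul_nonneg (Nat.cast_nonneg m) hτ.le
    positivity
  have hcle1 : ∀ m : ℕ, c m ≤ 1 := by
    intro m; rw [hc]
    have h0 : (0:ℝ) ≤ (m : ℝ) * τ := mul_nonneg (Nat.cast_nonneg m) hτ.le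
    rw [div_le_one (by linarith)]; linarith
  have hcanti : ∀ m : ℕ, c (m + 1) ≤ c m := by
    intro m; rw [hc, hc]
    have h0 : (0:ℝ) ≤ (m : ℝ) * τ := mul_nonneg (Nat.cast_nonneg m) hτ.le
    apply one_div_le_one_div_of_le (by linarith)
    push_cast; linarith
  set E : ℝ := ∫ y, max 0 y ∂μ with hE
  have hEnn : 0 ≤ E := integral_nonneg fun y => le_max_left _ _
  have hint0 : Integrable (fun y : ℝ => max 0 y) μ := int_max_aux μ hmean 0 le_rfl
  -- the basic structural facts on the value functions, by downward induction
  have key : ∀ k m : ℕ, m + k = N → 1 ≤ m →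
      (∀ x x' : ℝ, 0 ≤ x → x ≤ x' → V m x ≤ V m x') ∧
      (∀ x : ℝ, 0 ≤ x → 0 ≤ V m x) ∧
      (∀ x : ℝ, 0 ≤ x → V m x ≤ x + (k : ℝ) * E) ∧
      (∀ x x' : ℝ, 0 ≤ x → x ≤ x' → V m x' - V m x ≤ c m * (x' - x)) := by
    intro k
    induction k with
    | zero =>
      intro m hmN hm1
      have hmN' : m = N := by omega
      subst hmN'
      refine ⟨?_, ?_, ?_, ?_⟩
      · intro x x' hx hxx'
        rw [hVN x hx, hVN x' (hx.trans hxx')]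
        exact mul_le_mul_of_nonneg_left hxx' (hcpos m).le
      · intro x hx
        rw [hVN x hx]; exact mul_nonneg (hcpos m).le hx
      · intro x hx
        rw [hVN x hx]
        have := mul_le_of_le_one_left hx (hcle1 m)
        push_cast; linarith
      · intro x x' hx hxx'
        rw [hVN x hx, hVN x' (hx.trans hxx')]
        nlinarith [hcpos m]
    | succ k ih =>
      intro m hmN hm1
      obtain ⟨mono1, nn1, ub1, lip1⟩ := ih (m + 1) (by omega) (by omega)
      have hint := fun x hx => intV_aux μ hmean (V (m + 1)) mono1 nn1 _ ub1 x hx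
      have hVmx : ∀ x : ℝ, 0 ≤ x →
          V m x = max (c m * x) (∫ y, V (m + 1) (max x y) ∂μ) :=
        fun x hx => hVn m hm1 (by omega) x hx
      -- upper bound for the integral
      have hIub : ∀ x : ℝ, 0 ≤ x →
          (∫ y, V (m + 1) (max x y) ∂μ) ≤ x + ((k : ℝ) + 1) * E := by
        intro x hx
        have h1 : (∫ y, V (m + 1) (max x y) ∂μ) ≤
            ∫ y, (max x y + (k : ℝ) * E) ∂μ := by
          refine integral_mono (hint x hx)
            ((int_max_aux μ hmean x hx).add (integrable_const _)) ?_
          intro y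
          exact ub1 _ (hx.trans (le_max_left _ _))
        rw [integral_add (int_max_aux μ hmean x hx) (integrable_const _),
          integral_const] at h1
        have h2 : (∫ y, max x y ∂μ) ≤ ∫ y, (x + max 0 y) ∂μ := by
          refine integral_mono (int_max_aux μ hmean x hx)
            ((integrable_const x).add hint0) ?_
          intro y
          show max x y ≤ x + max 0 y
          exact max_le (by linarith [le_max_left (0:ℝ) y])
            (by linarith [le_max_right (0:ℝ) y])
        rw [integral_add (integrable_const x) hint0, integral_const] at h2
        simp only [measure_univ, ENNReal.toReal_one, probReal_univ, smul_eq_mul, one_mul] at h1 h2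
        linarith
      refine ⟨?_, ?_, ?_, ?_⟩
      · intro x x' hx hxx'
        rw [hVmx x hx, hVmx x' (hx.trans hxx')]
        refine max_le_max (mul_le_mul_of_nonneg_left hxx' (hcpos m).le) ?_
        refine integral_mono (hint x hx) (hint x' (hx.trans hxx')) ?_
        intro y
        exact mono1 _ _ (hx.trans (le_max_left _ _)) (max_le_max hxx' le_rfl)
      · intro x hx
        rw [hVmx x hx]
        exact le_max_of_le_left (mul_nonneg (hcpos m).le hx)
      · intro x hx
        rw [hVmx x hx]
        refine max_le ?_ ?_
        · have := mul_le_of_le_one_left hx (hcle1 m)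
          have : (0:ℝ) ≤ ((k : ℝ) + 1) * E := mul_nonneg (by positivity) hEnn
          push_cast
          nlinarith [mul_le_of_le_one_left hx (hcle1 m)]
        · have := hIub x hx; push_cast; linarith
      · intro x x' hx hxx'
        rw [hVmx x hx, hVmx x' (hx.trans hxx')]
        have hflip := Flip_aux μ hmean (V (m + 1)) mono1 nn1 _ ub1 (c (m + 1))
          (hcpos _).le lip1 x x' hx hxx'
        have hcm : c (m + 1) * (x' - x) ≤ c m * (x' - x) :=
          mul_le_mul_of_nonneg_right (hcanti m) (by linarith)
        have h1 : c m * x' ≤ max (c m * x) (∫ y, V (m + 1) (max x y) ∂μ)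
            + c m * (x' - x) := by
          have := le_max_left (c m * x) (∫ y, V (m + 1) (max x y) ∂μ)
          nlinarith [hcpos m]
        have h2 : (∫ y, V (m + 1) (max x' y) ∂μ) ≤
            max (c m * x) (∫ y, V (m + 1) (max x y) ∂μ) + c m * (x' - x) := by
          have := le_max_right (c m * x) (∫ y, V (m + 1) (max x y) ∂μ)
          linarith
        have := max_le h1 h2
        linarith
  -- main argument
  intro n hn1 hn2 hge
  obtain ⟨⟨htn_pos, htn_eq⟩, -⟩ := ht n hn1 (by omega)
  obtain ⟨⟨ht1_pos, ht1_eq⟩, -⟩ := ht (n + 1) (by omega) (by omega)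
  obtain ⟨mono2, nn2, ub2, lip2⟩ := key (N - (n + 2)) (n + 2) (by omega) (by omega)
  have claimA : ∀ y : ℝ, V (n + 1) (max (t n) y) = c (n + 1) * max (t n) y := by
    intro y
    set x := max (t n) y with hxdef
    have hx1 : t (n + 1) ≤ x := hge.trans (le_max_left _ _)
    have hxpos : 0 ≤ x := ht1_pos.le.trans hx1
    have hF : (∫ z, V (n + 2) (max x z) ∂μ) ≤ c (n + 1) * x := by
      have hflip := Flip_aux μ hmean (V (n + 2)) mono2 nn2 _ ub2 (c (n + 2))
        (hcpos _).le lip2 (t (n + 1)) x ht1_pos.le hx1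
      have h2 : c (n + 2) * (x - t (n + 1)) ≤ c (n + 1) * (x - t (n + 1)) :=
        mul_le_mul_of_nonneg_right (hcanti _) (by linarith)
      have h3 : c (n + 1) * t (n + 1) + c (n + 1) * (x - t (n + 1))
          = c (n + 1) * x := by ring
      have h4 : (∫ z, V (n + 2) (max (t (n + 1)) z) ∂μ) = c (n + 1) * t (n + 1) :=
        ht1_eq.symm
      linarith
    have hexp := hVn (n + 1) (by omega) (by omega) x hxpos
    rw [hexp]
    exact max_eq_left hF
  rw [htn_eq, hh]
  simp only [claimA]
  rw [integral_const_mul]
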